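/- arXiv:1610.04039 — 3 statements merged into one kernel-verified Lean document; each statement's English description precedes it below -/
import Mathlib

section
/- Consider a two-player infinite game on a set A in which players alternately choose elements of A, and suppose the payoff set W ⊆ A^ω for player I is finitely decided: for every play p ∈ W there exists n such that every play extending p↾n lies in W. Then the game is determined: either player I or player II has a winning strategy. -/
/-- The play of the game determined by strategies `σ` (for player I, moving at even stages)
and `τ` (for player II, moving at odd stages). -/
noncomputable def gamePlay {A : Type*} (σ τ : List A → A) : ℕ → A := fun n =>
  Nat.strongRecOn n (fun n ih =>
    let h : List A := List.ofFn fun i : Fin n => ih i i.isLt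
    if n % 2 = 0 then σ h else τ h)

section GS

variable {A : Type*} [Nonempty A]

/-- The position (finite history) after `n` moves of the play. -/
noncomputable def gamePos (σ τ : List A → A) (n : ℕ) : List A :=
  List.ofFn fun i : Fin n => gamePlay σ τ i

lemma gamePlay_eq (σ τ : List A → A) (n : ℕ) :
    gamePlay σ τ n = if n % 2 = 0 then σ (gamePos σ τ n) else τ (gamePos σ τ n) := by
  exact Nat.strongRecOn_eq _ n

lemma gamePos_length (σ τ : List A → A) (n : ℕ) : (gamePos σ τ n).length = n := by
  simp [gamePos]

lemma gamePos_get (σ τ : List A → A) (n i : ℕ) (h : i < (gamePos σ τ n).length) :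
    (gamePos σ τ n)[i] = gamePlay σ τ i := by
  simp [gamePos]

/-- `σ` is consistent with position `s` at player I's (even) stages. -/
def ConsI (σ : List A → A) (s : List A) : Prop :=
  ∀ i (h : i < s.length), i % 2 = 0 → σ (s.take i) = s[i]

/-- `τ` is consistent with position `s` at player II's (odd) stages. -/
def ConsII (τ : List A → A) (s : List A) : Prop :=
  ∀ i (h : i < s.length), i % 2 = 1 → τ (s.take i) = s[i]

/-- Player I has a winning strategy in the subgame starting at position `s`. -/
def IWins (W : Set (ℕ → A)) (s : List A) : Prop :=
  ∃ σ : List A → A, ConsI σ s ∧ ∀ τ : List A → A, ConsII τ s → gamePlay σ τ ∈ W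

lemma play_prefix {σ τ : List A → A} {s : List A} (hσ : ConsI σ s) (hτ : ConsII τ s) :
    ∀ i (h : i < s.length), gamePlay σ τ i = s[i] := by
  intro i
  induction i using Nat.strongRecOn with
  | ind i IH =>
    intro h
    have hpos : gamePos σ τ i = s.take i := by
      apply List.ext_getElem
      · simp [gamePos_length, Nat.le_of_lt h]
      · intro j h1 h2
        rw [gamePos_get, List.getElem_take]
        exact IH j (by simpa [gamePos_length] using h1)
          (lt_trans (by simpa [gamePos_length] using h1) h)
    rw [gamePlay_eq, hpos]
    by_cases he : i % 2 = 0
    · rw [if_pos he]; exact hσ i h he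
    · rw [if_neg he]; exact hτ i h (by omega)

lemma pos_eq_take {σ τ : List A → A} {s : List A} (hσ : ConsI σ s) (hτ : ConsII τ s)
    {n : ℕ} (hn : n ≤ s.length) : gamePos σ τ n = s.take n := by
  apply List.ext_getElem
  · simp [gamePos_length, hn]
  · intro j h1 h2
    rw [gamePos_get, List.getElem_take]
    exact play_prefix hσ hτ j (lt_of_lt_of_le (by simpa [gamePos_length] using h1) hn)

/-- A "secured" position: every play extending it lies in `W`. Then I wins from it. -/
lemma IWins_of_secured {W : Set (ℕ → A)} {s : List A}
    (hs : ∀ q : ℕ → A, (∀ i (h : i < s.length), q i = s[i]) → q ∈ W) : IWins W s := by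
  classical
  set σ : List A → A := fun t =>
    if h : t.length < s.length then s[t.length] else Classical.arbitrary A with hσ
  have hcons : ConsI σ s := by
    intro i h _
    simp [hσ, List.length_take, Nat.min_eq_left (Nat.le_of_lt h), h]
  refine ⟨σ, hcons, fun τ hτ => hs _ fun i h => play_prefix hcons hτ i h⟩

/-- If I wins from `s ++ [a]` and it is I's move at `s`, then I wins from `s`. -/
lemma IWins_of_succ {W : Set (ℕ → A)} {s : List A} {a : A} (hev : s.length % 2 = 0)
    (h : IWins W (s ++ [a])) : IWins W s := by
  obtain ⟨σ, hcons, hwin⟩ := h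
  refine ⟨σ, ?_, ?_⟩
  · intro i hi hie
    have := hcons i (by simp; omega) hie
    rwa [List.take_append_of_le_length (Nat.le_of_lt hi),
      List.getElem_append_left hi] at this
  · intro τ hτ
    apply hwin τ
    intro i hi hio
    have hi' : i < s.length := by simp at hi; omega
    rw [List.take_append_of_le_length (Nat.le_of_lt hi'), List.getElem_append_left hi']
    exact hτ i hi' hio

lemma plays_eq_of_agree {σ σ' τ : List A → A}
    (hagree : ∀ n, n % 2 = 0 → gamePos σ τ n = gamePos σ' τ n →
      σ (gamePos σ τ n) = σ' (gamePos σ' τ n)) :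
    ∀ n, gamePlay σ τ n = gamePlay σ' τ n := by
  intro n
  induction n using Nat.strongRecOn with
  | ind n IH =>
    have hpos : gamePos σ τ n = gamePos σ' τ n := by
      apply List.ext_getElem
      · simp [gamePos_length]
      · intro j h1 h2
        rw [gamePos_get, gamePos_get]
        exact IH j (by simpa [gamePos_length] using h1)
    rw [gamePlay_eq, gamePlay_eq]
    by_cases h : n % 2 = 0
    · rw [if_pos h, if_pos h]
      exact hagree n h hpos
    · rw [if_neg h, if_neg h, hpos]

/-- If it is II's move at `s` and I wins from every `s ++ [a]`, then I wins from `s`. -/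
lemma IWins_of_all_succ {W : Set (ℕ → A)} {s : List A} (hod : s.length % 2 = 1)
    (h : ∀ a : A, IWins W (s ++ [a])) : IWins W s := by
  classical
  choose σ hcons hwin using h
  set σ0 : List A → A := fun t =>
    if ht : s.length < t.length then σ (t[s.length]) t
    else if ht2 : t.length < s.length then s[t.length] else Classical.arbitrary A with hσ0
  have hσ0_lt : ∀ t : List A, (h1 : t.length < s.length) → σ0 t = s[t.length] := by
    intro t h1
    simp only [hσ0]
    rw [dif_neg (by omega), dif_pos h1]
  have hσ0_gt : ∀ t : List A, (h1 : s.length < t.length) → σ0 t = σ (t[s.length]) t := by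
    intro t h1
    simp only [hσ0]
    rw [dif_pos h1]
  have hconsσ0 : ConsI σ0 s := by
    intro i hi hie
    rw [hσ0_lt _ (by simp [List.length_take, Nat.min_eq_left (Nat.le_of_lt hi)]; omega)]
    simp [List.length_take, Nat.min_eq_left (Nat.le_of_lt hi), hi]
  refine ⟨σ0, hconsσ0, ?_⟩
  intro τ hτ
  set a : A := τ s with ha
  have hτ' : ConsII τ (s ++ [a]) := by
    intro i hi hio
    rcases Nat.lt_or_ge i s.length with h' | h'
    · rw [List.take_append_of_le_length (Nat.le_of_lt h'), List.getElem_append_left h']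
      exact hτ i h' hio
    · have hieq : i = s.length := by simp at hi; omega
      subst hieq
      rw [List.take_append_of_le_length (le_refl _), List.take_length,
        List.getElem_append_right (le_refl _)]
      simp [ha]
  have hplay_a : gamePlay (σ a) τ s.length = a := by
    rw [gamePlay_eq, if_neg (by omega)]
    rw [pos_eq_take (hcons a) hτ' (by simp), List.take_append_of_le_length (le_refl _),
      List.take_length]
  have key : ∀ n, gamePlay σ0 τ n = gamePlay (σ a) τ n := by
    apply plays_eq_of_agree
    intro n hev hpos
    rcases Nat.lt_trichotomy n s.length with hlt | heq | hgt
    · have hn : n ≤ s.length := Nat.le_of_lt hlt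
      have h1 : gamePos (σ a) τ n = s.take n :=
        (pos_eq_take (hcons a) hτ' (by simp; omega)).trans
          (List.take_append_of_le_length hn)
      rw [hpos, h1]
      rw [hσ0_lt _ (by simp [List.length_take, Nat.min_eq_left hn]; omega)]
      have h2 := hcons a n (by simp; omega) hev
      rw [List.take_append_of_le_length hn, List.getElem_append_left hlt] at h2
      rw [h2]
      congr 1
      simp [List.length_take, Nat.min_eq_left hn]
    · omega
    · rw [hpos, hσ0_gt _ (by simp [gamePos_length]; omega)]
      congr 1
      rw [gamePos_get _ _ _ _ (by simp [gamePos_length]; omega)]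
      exact hplay_a
  have : gamePlay σ0 τ = gamePlay (σ a) τ := funext key
  rw [this]
  exact hwin a τ hτ'

end GS

/-- Gale–Stewart for finitely decided (open) payoff sets: either player I or player II has a
winning strategy. -/
theorem open_game_determined {A : Type*} [Nonempty A] (W : Set (ℕ → A))
    (hopen : ∀ p ∈ W, ∃ n : ℕ, ∀ q : ℕ → A, (∀ i < n, q i = p i) → q ∈ W) :
    (∃ σ : List A → A, ∀ τ : List A → A, gamePlay σ τ ∈ W) ∨
    (∃ τ : List A → A, ∀ σ : List A → A, gamePlay σ τ ∉ W) := by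
  classical
  by_cases h0 : IWins W ([] : List A)
  · left
    obtain ⟨σ, _, hwin⟩ := h0
    exact ⟨σ, fun τ => hwin τ (fun i hi _ => absurd hi (by simp))⟩
  · right
    set τ : List A → A := fun s =>
      if h : ∃ a : A, ¬ IWins W (s ++ [a]) then Classical.choose h
      else Classical.arbitrary A with hτdef
    refine ⟨τ, fun σ => ?_⟩
    intro hp
    set p := gamePlay σ τ with hpdef
    -- every position along the play is "bad" (I does not win from it)
    have hbad : ∀ n, ¬ IWins W (gamePos σ τ n) := by
      intro n
      induction n with
      | zero => simpa [gamePos] using h0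
      | succ n IH =>
        have hstep : gamePos σ τ (n + 1) = gamePos σ τ n ++ [gamePlay σ τ n] := by
          rw [gamePos, List.ofFn_succ', List.concat_eq_append]
          simp [gamePos, Fin.castSucc]
        rw [hstep]
        by_cases hev : n % 2 = 0
        · -- I's move: all successors of a bad even position are bad
          intro hcon
          exact IH (IWins_of_succ (by rw [gamePos_length]; omega) hcon)
        · -- II's move: τ picks a bad successor
          have hod : (gamePos σ τ n).length % 2 = 1 := by
            rw [gamePos_length]; omega
          have hex : ∃ a : A, ¬ IWins W (gamePos σ τ n ++ [a]) := by
            by_contra hcon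
            push_neg at hcon
            exact IH (IWins_of_all_succ hod hcon)
          have hplay : gamePlay σ τ n = τ (gamePos σ τ n) := by
            rw [gamePlay_eq, if_neg hev]
          rw [hplay, hτdef]
          simp only [dif_pos hex]
          rw [hτdef] at hex
          rw [dif_pos hex]
          exact Classical.choose_spec hex
    obtain ⟨n, hn⟩ := hopen p hp
    apply hbad n
    apply IWins_of_secured
    intro q hq
    apply hn
    intro i hi
    rw [hq i (by simp [gamePos_length]; omega), gamePos_get]
end

section
/- There exists an Ulam matrix on ω₁: a family (A_{α,n} : α < ω₁, n < ω) of subsets of ω₁ such that (1) for each fixed n, the sets A_{α,n} for distinct α < ω₁ are pairwise disjoint, and (2) for each fixed α < ω₁, the set ω₁ \ ⋃_{n<ω} A_{α,n} is countable. -/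
open Cardinal Set

universe u in
private lemma ulam_aux_cnt (β : Ordinal.{u}) (hβ : β < (Cardinal.aleph 1).ord) :
    (Set.Iio β).Countable := by
  rw [Cardinal.lt_ord] at hβ
  have h1 : β.card ≤ Cardinal.aleph0 := by
    rwa [← Cardinal.succ_aleph0, Order.lt_succ_iff] at hβ
  have h2 : Cardinal.mk (Set.Iio β) ≤ Cardinal.aleph0 := by
    rw [Ordinal.mk_Iio_ordinal]
    calc Cardinal.lift.{u+1} β.card ≤ Cardinal.lift.{u+1} Cardinal.aleph0 :=
        Cardinal.lift_le.2 h1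
      _ = Cardinal.aleph0 := by simp
  exact Cardinal.mk_le_aleph0_iff.1 h2

universe u in
private lemma ulam_lift_omega1 :
    Ordinal.lift.{u} (Cardinal.aleph 1 : Cardinal.{0}).ord = (Cardinal.aleph 1).ord := by
  rw [Cardinal.lift_ord, Cardinal.lift_aleph]
  norm_num

open Classical in
universe u in
private noncomputable def ulamDown (α : Ordinal.{u}) : Ordinal.{0} :=
  if h : ∃ a : Ordinal.{0}, Ordinal.lift.{u} a = α then h.choose else 0

universe u in
private lemma ulam_lift_down {α : Ordinal.{u}} (hα : α < (Cardinal.aleph 1).ord) :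
    Ordinal.lift.{u} (ulamDown α) = α := by
  have h : α ≤ Ordinal.lift.{u} (Cardinal.aleph 1 : Cardinal.{0}).ord := by
    rw [ulam_lift_omega1]; exact hα.le
  obtain ⟨a, ha⟩ := Ordinal.mem_range_lift_of_le h
  have hex : ∃ a : Ordinal.{0}, Ordinal.lift.{u} a = α := ⟨a, ha⟩
  rw [ulamDown, dif_pos hex]
  exact hex.choose_spec

universe u in
private lemma ulam_down_lt {α : Ordinal.{u}} (hα : α < (Cardinal.aleph 1).ord) :
    ulamDown α < (Cardinal.aleph 1 : Cardinal.{0}).ord := by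
  rw [← Ordinal.lift_lt.{u}, ulam_lift_down hα, ulam_lift_omega1]
  exact hα

/-- There exists an Ulam matrix on `ω₁`. -/
theorem ulam_matrix_exists :
    ∃ A : Ordinal → ℕ → Set Ordinal,
      (∀ α n, A α n ⊆ Set.Iio (Cardinal.aleph 1).ord) ∧
      (∀ n : ℕ, ∀ α < (Cardinal.aleph 1).ord, ∀ β < (Cardinal.aleph 1).ord,
        α ≠ β → Disjoint (A α n) (A β n)) ∧
      (∀ α < (Cardinal.aleph 1).ord,
        (Set.Iio (Cardinal.aleph 1).ord \ ⋃ n : ℕ, A α n).Countable) := by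
  classical
  have hf : ∀ β : Ordinal, ∃ g : Set.Iio β → ℕ,
      β < (aleph 1).ord → Function.Injective g := by
    intro β
    by_cases hβ : β < (aleph 1).ord
    · obtain ⟨g, hg⟩ := Set.countable_iff_exists_injective.1 (ulam_aux_cnt β hβ)
      exact ⟨g, fun _ => hg⟩
    · exact ⟨fun _ => 0, fun h => absurd h hβ⟩
  choose f hfinj using hf
  refine ⟨fun α n => {β | β < (aleph 1).ord ∧
      ∃ h : Ordinal.lift (ulamDown α) < β, f β ⟨Ordinal.lift (ulamDown α), h⟩ = n},
    ?_, ?_, ?_⟩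
  · intro α n β hβ
    exact hβ.1
  · intro n α hα β hβ hne
    rw [Set.disjoint_left]
    rintro γ ⟨hγ, h1, e1⟩ ⟨_, h2, e2⟩
    have heq := hfinj γ hγ (a₁ := ⟨Ordinal.lift (ulamDown α), h1⟩)
      (a₂ := ⟨Ordinal.lift (ulamDown β), h2⟩) (by rw [e1, e2])
    have : Ordinal.lift (ulamDown α) = Ordinal.lift (ulamDown β) :=
      congrArg Subtype.val heq
    rw [Ordinal.lift_inj] at this
    exact hne (by rw [← ulam_lift_down hα, ← ulam_lift_down hβ, this])
  · intro α hα
    set α' : Ordinal := Ordinal.lift (ulamDown α) with hα'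
    have hα'lt : α' < (aleph 1).ord := by
      rw [hα', ← ulam_lift_omega1, Ordinal.lift_lt]
      exact ulam_down_lt hα
    have hsub : (Set.Iio (aleph 1).ord \
        ⋃ n : ℕ, {β | β < (aleph 1).ord ∧ ∃ h : α' < β, f β ⟨α', h⟩ = n})
        ⊆ Set.Iic α' := by
      rintro β ⟨hβ, hβ2⟩
      by_contra hle
      rw [Set.mem_Iic, not_le] at hle
      exact hβ2 (Set.mem_iUnion.2 ⟨f β ⟨α', hle⟩, hβ, hle, rfl⟩)
    have hsucc : α' + 1 < (aleph 1).ord :=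
      by rw [← Order.succ_eq_add_one]; exact (Cardinal.isSuccLimit_ord (Cardinal.aleph0_le_aleph 1)).succ_lt hα'lt
    refine (ulam_aux_cnt (α' + 1) hsucc).mono (hsub.trans ?_)
    intro x hx
    exact lt_of_le_of_lt hx (lt_add_one α')
end

section
/- There is no σ-complete ideal I on ω₁ containing all singletons such that I is ℵ₁-saturated: for any such ideal there exist ℵ₁-many subsets of ω₁, each not in I, whose pairwise intersections are in I. -/
/-- The underlying set of `ω₁`, as a type. -/
def OmegaOne : Type 1 := {o : Ordinal.{0} // o < (Cardinal.aleph 1).ord}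

open Cardinal in
private lemma omegaOne_countable_lt (o : Ordinal.{0}) (ho : o.card ≤ Cardinal.aleph0) :
    Countable {a : OmegaOne | a.1 < o} := by
  rw [← Cardinal.mk_le_aleph0_iff]
  calc #{a : OmegaOne | a.1 < o} ≤ #(Set.Iio o) :=
        Cardinal.mk_le_of_injective (f := fun x => (⟨x.1.1, x.2⟩ : Set.Iio o))
          (fun x y h => by
            apply Subtype.ext; apply Subtype.ext
            simpa [Subtype.ext_iff] using h)
    _ = Cardinal.lift.{1} o.card := Ordinal.mk_Iio_ordinal o
    _ ≤ Cardinal.lift.{1} Cardinal.aleph0 := Cardinal.lift_le.2 ho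
    _ = Cardinal.aleph0 := Cardinal.lift_aleph0

private lemma omegaOne_card_le (b : OmegaOne) : b.1.card ≤ Cardinal.aleph0 := by
  have h : b.1.card < Order.succ Cardinal.aleph0 := by
    rw [Cardinal.succ_aleph0]; exact Cardinal.lt_ord.mp b.2
  exact Order.lt_succ_iff.mp h

open Cardinal in
private lemma omegaOne_not_countable : ¬ Countable OmegaOne := by
  intro h
  have h1 : #(Set.Iio ((Cardinal.aleph 1).ord)) ≤ #OmegaOne :=
    Cardinal.mk_le_of_injective (f := fun x => (⟨x.1, x.2⟩ : OmegaOne))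
      (fun x y hxy => Subtype.ext (congrArg Subtype.val hxy))
  rw [Ordinal.mk_Iio_ordinal, Cardinal.card_ord] at h1
  have h2 : #OmegaOne ≤ Cardinal.aleph0 := Cardinal.mk_le_aleph0
  have h4 : Cardinal.aleph0.{1} < Cardinal.lift.{1,0} (Cardinal.aleph 1) := by
    have h5 := Cardinal.lift_lt.{0,1}.2 Cardinal.aleph0_lt_aleph_one.{0}
    rwa [Cardinal.lift_aleph0] at h5
  exact absurd (h1.trans h2) (not_le.2 h4)

open Cardinal in
private lemma omegaOne_mk_le : #OmegaOne ≤ (Cardinal.aleph 1 : Cardinal.{1}) := by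
  have h1 : #OmegaOne ≤ #(Set.Iio ((Cardinal.aleph 1).ord)) :=
    Cardinal.mk_le_of_injective
      (f := fun x : OmegaOne => (⟨x.1, x.2⟩ : Set.Iio ((Cardinal.aleph 1).ord)))
      (fun x y hxy => Subtype.ext (congrArg Subtype.val hxy))
  rwa [Ordinal.mk_Iio_ordinal, Cardinal.card_ord, Cardinal.lift_aleph,
    Ordinal.lift_one] at h1

private lemma omegaOne_nonempty : Nonempty OmegaOne := by
  refine ⟨⟨0, ?_⟩⟩
  rw [← Cardinal.ord_zero]
  exact Cardinal.ord_lt_ord.2 (Cardinal.aleph0_pos.trans Cardinal.aleph0_lt_aleph_one)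

open Cardinal in
/-- No σ-complete proper ideal on `ω₁` containing all singletons is `ℵ₁`-saturated:
there are `ℵ₁` many `I`-positive sets with pairwise intersections in `I`. -/
theorem no_aleph1_saturated_ideal (I : Set (Set OmegaOne))
    (hdown : ∀ B C : Set OmegaOne, B ⊆ C → C ∈ I → B ∈ I)
    (hsigma : ∀ f : ℕ → Set OmegaOne, (∀ n, f n ∈ I) → (⋃ n, f n) ∈ I)
    (hsing : ∀ a : OmegaOne, ({a} : Set OmegaOne) ∈ I)
    (hproper : (Set.univ : Set OmegaOne) ∉ I) :
    ∃ S : OmegaOne → Set OmegaOne,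
      (∀ a, S a ∉ I) ∧ ∀ a b, a ≠ b → S a ∩ S b ∈ I := by
  classical
  obtain ⟨pt⟩ := omegaOne_nonempty
  -- countable sets are in I
  have hctble : ∀ s : Set OmegaOne, s.Countable → s ∈ I := by
    intro s hs
    rcases s.eq_empty_or_nonempty with rfl | hne
    · exact hdown _ _ (Set.empty_subset _) (hsing pt)
    · obtain ⟨f, rfl⟩ := hs.exists_eq_range hne
      have : Set.range f = ⋃ n, ({f n} : Set OmegaOne) := by
        ext x; simp [Set.range, eq_comm]
      rw [this]
      exact hsigma _ fun n => hsing (f n)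
  have hunion : ∀ B C : Set OmegaOne, B ∈ I → C ∈ I → B ∪ C ∈ I := by
    intro B C hB hC
    have := hsigma (fun n => Nat.rec B (fun _ _ => C) n) (by rintro (_ | n) <;> assumption)
    refine hdown _ _ ?_ this
    intro x hx
    rcases hx with hx | hx
    · exact Set.mem_iUnion.2 ⟨0, hx⟩
    · exact Set.mem_iUnion.2 ⟨1, hx⟩
  -- injections from initial segments into ℕ
  have hFex : ∀ b : OmegaOne, ∃ F : {a : OmegaOne // a.1 < b.1} → ℕ, Function.Injective F := by
    intro b
    have : Countable {a : OmegaOne | a.1 < b.1} :=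
      omegaOne_countable_lt b.1 (omegaOne_card_le b)
    exact countable_iff_exists_injective _ |>.mp this
  choose F hF using hFex
  -- the Ulam matrix
  set A : ℕ → OmegaOne → Set OmegaOne :=
    fun n a => {b : OmegaOne | ∃ h : a.1 < b.1, F b ⟨a, h⟩ = n} with hA
  -- each column has a positive entry
  have hcol : ∀ a : OmegaOne, ∃ n, A n a ∉ I := by
    intro a
    by_contra hcon
    push_neg at hcon
    have hle : {b : OmegaOne | b.1 ≤ a.1} ∈ I := by
      have hsub : {b : OmegaOne | b.1 ≤ a.1} ⊆ {b : OmegaOne | b.1 < a.1} ∪ {a} := by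
        intro b hb
        rcases (show b.1 ≤ a.1 from hb).lt_or_eq with h | h
        · exact Or.inl h
        · exact Or.inr (by simp [Subtype.ext h])
      refine hdown _ _ hsub (hunion _ _ ?_ (hsing a))
      exact hctble _ (Set.countable_coe_iff.mp
        (omegaOne_countable_lt a.1 (omegaOne_card_le a)))
    have huniv : (Set.univ : Set OmegaOne) ⊆ (⋃ n, A n a) ∪ {b : OmegaOne | b.1 ≤ a.1} := by
      intro b _
      rcases lt_or_ge a.1 b.1 with h | h
      · exact Or.inl (Set.mem_iUnion.2 ⟨F b ⟨a, h⟩, ⟨h, rfl⟩⟩)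
      · exact Or.inr h
    exact hproper (hdown _ _ huniv (hunion _ _ (hsigma _ hcon) hle))
  choose cn hcn using hcol
  -- pigeonhole: some row is used uncountably often
  have hrow : ∃ n, ¬ ({a : OmegaOne | cn a = n}).Countable := by
    by_contra hcon
    push_neg at hcon
    have huniv : (Set.univ : Set OmegaOne) = ⋃ n, {a : OmegaOne | cn a = n} := by
      ext a; simp
    have : (Set.univ : Set OmegaOne).Countable := by
      rw [huniv]; exact Set.countable_iUnion hcon
    exact omegaOne_not_countable (Set.countable_univ_iff.mp this)
  obtain ⟨n₀, hn₀⟩ := hrow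
  -- embed OmegaOne into that row
  have hbig : #OmegaOne ≤ #({a : OmegaOne | cn a = n₀}) := by
    refine omegaOne_mk_le.trans ?_
    rw [← Cardinal.succ_aleph0]
    refine Order.succ_le_of_lt ?_
    rw [lt_iff_not_ge]
    intro h
    exact hn₀ (Cardinal.le_aleph0_iff_set_countable.mp h)
  obtain ⟨g⟩ := Cardinal.le_def _ _ |>.mp hbig
  refine ⟨fun a => A n₀ (g a).1, fun a => ?_, fun a b hab => ?_⟩
  · have h2 := (g a).2
    simp only [Set.mem_setOf_eq] at h2
    have h3 := hcn (g a).1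
    rwa [h2] at h3
  · have hempty : A n₀ (g a).1 ∩ A n₀ (g b).1 = ∅ := by
      ext c
      simp only [hA, Set.mem_inter_iff, Set.mem_setOf_eq, Set.mem_empty_iff_false, iff_false]
      rintro ⟨⟨h1, e1⟩, ⟨h2, e2⟩⟩
      have heq := hF c (e1.trans e2.symm)
      have hval : (g a).1 = (g b).1 := Subtype.mk_eq_mk.mp heq
      exact hab (g.injective (Subtype.ext hval))
    rw [hempty]
    exact hdown _ _ (Set.empty_subset _) (hsing pt)
end
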